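/- Let 𝐒 and 𝐒_{-1} be bounded on 𝐄 with 𝐒_{-1}𝐒 = I. Then σ(𝐒_{-1}) = { z ∈ ℂ : |z| ≤ ρ(𝐒_{-1}) }, i.e. the spectrum of the backward shift 𝐒_{-1} is the full closed disk of radius ρ(𝐒_{-1}), given that the annulus { 1/ρ(𝐒) ≤ |z| ≤ ρ(𝐒_{-1}) } is contained in σ(𝐒_{-1}). -/

import Mathlib

open scoped ENNReal

/-- If `𝐒` and `𝐒₋₁` are bounded on `𝐄` with `𝐒₋₁𝐒 = I`, `0` is an eigenvalue of `𝐒*`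
(arising from `0` in the residual spectrum of `𝐒`), and the annulus
`{1/ρ(𝐒) ≤ |z| ≤ ρ(𝐒₋₁)}` is contained in `σ(𝐒₋₁)`, then `σ(𝐒₋₁)` is the full closed
disk of radius `ρ(𝐒₋₁)`. -/
theorem spectrum_backward_shift_eq_disk {E : Type*} [NormedAddCommGroup E] [NormedSpace ℂ E]
    [CompleteSpace E] (S Sm : E →L[ℂ] E) (hid : ∀ x : E, Sm (S x) = x)
    (hg : ∃ g : StrongDual ℂ E, g ≠ 0 ∧ ∀ x : E, g (S x) = 0)
    (hann : {z : ℂ | (spectralRadius ℂ S)⁻¹ ≤ (‖z‖₊ : ℝ≥0∞) ∧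
        (‖z‖₊ : ℝ≥0∞) ≤ spectralRadius ℂ Sm} ⊆ spectrum ℂ Sm) :
    spectrum ℂ Sm = {z : ℂ | (‖z‖₊ : ℝ≥0∞) ≤ spectralRadius ℂ Sm} := by
  obtain ⟨g, hg0, hgS⟩ := hg
  -- S is not surjective, hence not a unit in the algebra
  have hSnotunit : ¬ IsUnit S := by
    intro hS
    obtain ⟨y, hy⟩ : ∃ y, g y ≠ 0 := by
      by_contra h
      push_neg at h
      exact hg0 (by ext y; simp [h y])
    obtain ⟨u, hu⟩ := hS
    have hsurj : Function.Surjective S := by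
      intro y
      refine ⟨((u⁻¹ : (E →L[ℂ] E)ˣ) : E →L[ℂ] E) y, ?_⟩
      have : ((u : E →L[ℂ] E) * (u⁻¹ : (E →L[ℂ] E)ˣ)) y = y := by
        rw [u.mul_inv]; simp
      simpa [hu] using this
    obtain ⟨x, hx⟩ := hsurj y
    exact hy (hx ▸ hgS x)
  ext z
  simp only [Set.mem_setOf_eq]
  constructor
  · intro hz
    exact le_iSup₂ (f := fun k (_ : k ∈ spectrum ℂ Sm) => (‖k‖₊ : ℝ≥0∞)) z hz
  · intro hz
    by_cases hcase : (spectralRadius ℂ S)⁻¹ ≤ (‖z‖₊ : ℝ≥0∞)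
    · exact hann ⟨hcase, hz⟩
    · push_neg at hcase
      -- `1 - z • S` is a unit
      have hU : IsUnit (1 - z • S) := spectrum.isUnit_one_sub_smul_of_lt_inv_radius hcase
      -- key algebraic identity: (Sm - z•1) * S = 1 - z • S
      have hkey : (Sm - z • 1) * S = 1 - z • S := by
        ext x
        simp [ContinuousLinearMap.mul_apply, hid x]
      rw [spectrum.mem_iff]
      intro hunit
      have hunit' : IsUnit (Sm - z • 1) := by
        have := hunit.neg
        simpa [neg_sub, Algebra.algebraMap_eq_smul_one] using this
      apply hSnotunit
      have : S = (hunit'.unit⁻¹ : (E →L[ℂ] E)ˣ) * (1 - z • S) := by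
        have h1 : ((hunit'.unit⁻¹ : (E →L[ℂ] E)ˣ) : E →L[ℂ] E) * (Sm - z • 1) = 1 := by
          simp
        calc S = (((hunit'.unit⁻¹ : (E →L[ℂ] E)ˣ) : E →L[ℂ] E) * (Sm - z • 1)) * S := by
                rw [h1, one_mul]
          _ = (hunit'.unit⁻¹ : (E →L[ℂ] E)ˣ) * ((Sm - z • 1) * S) := by rw [mul_assoc]
          _ = (hunit'.unit⁻¹ : (E →L[ℂ] E)ˣ) * (1 - z • S) := by rw [hkey]
      rw [this]
      exact (hunit'.unit⁻¹.isUnit).mul hU
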